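/- Let N ≥ 1, let O be a subgroup of the orthogonal group O(N), and let r > 0 be such that lim_{|y|→∞} m(y,r) = +∞, where m(y,r) := sup{ n ≥ 1 : there exist g₁,…,g_n ∈ O such that the balls B(g_i y, r), i = 1,…,n, are pairwise disjoint }. Let q ∈ [2, ∞), let C > 0, and let {u_n} be a sequence of measurable functions ℝ^N → ℝ such that each u_n is O-invariant (i.e., u_n(g x) = u_n(x) for every g ∈ O and almost every x ∈ ℝ^N), ‖u_n‖_q ≤ C for every n, and u_n → 0 in L²(B(0,R)) for every R > 0. Then lim_n sup_{y∈ℝ^N} ∫_{B(y,r)} u_n² dx = 0. -/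

import Mathlib

open MeasureTheory Real ENNReal

private lemma aux_inv {N : ℕ} (g : EuclideanSpace ℝ (Fin N) ≃ₗᵢ[ℝ] EuclideanSpace ℝ (Fin N))
    (u : EuclideanSpace ℝ (Fin N) → ℝ)
    (hinv : ∀ᵐ x, u (g x) = u x) (y : EuclideanSpace ℝ (Fin N)) (r : ℝ) :
    ∫⁻ x in Metric.ball (g y) r, ENNReal.ofReal ((u x)^2)
      = ∫⁻ x in Metric.ball y r, ENNReal.ofReal ((u x)^2) := by
  have hpre : ⇑g ⁻¹' Metric.ball (g y) r = Metric.ball y r := by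
    ext x; simp [Metric.mem_ball, g.dist_map]
  rw [← g.measurePreserving.setLIntegral_comp_preimage_emb
    g.toMeasurableEquiv.measurableEmbedding (fun x => ENNReal.ofReal ((u x)^2)) _, hpre]
  exact lintegral_congr_ae (ae_restrict_of_ae (hinv.mono fun x hx => by dsimp only; rw [hx]))

private lemma aux_holder {N : ℕ} {q C : ℝ} (hq : 2 ≤ q)
    (u : EuclideanSpace ℝ (Fin N) → ℝ) (hu : Measurable u)
    (hbound : eLpNorm u (ENNReal.ofReal q) volume ≤ ENNReal.ofReal C)
    (s : Set (EuclideanSpace ℝ (Fin N))) :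
    ∫⁻ x in s, ENNReal.ofReal ((u x)^2)
      ≤ (ENNReal.ofReal C)^2 * (volume s)^(1 - 2/q) := by
  have hq0 : (0:ℝ) < q := by linarith
  set μ := volume.restrict s with hμ
  have h2q : (2 : ℝ≥0∞) ≤ ENNReal.ofReal q := by
    rw [show (2:ℝ≥0∞) = ENNReal.ofReal 2 by simp]
    exact ENNReal.ofReal_le_ofReal hq
  have key := eLpNorm_le_eLpNorm_mul_rpow_measure_univ (μ := μ) h2q
    hu.aestronglyMeasurable
  have hI : ∫⁻ x in s, ENNReal.ofReal ((u x)^2) = (eLpNorm u 2 μ)^2 := by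
    rw [eLpNorm_eq_lintegral_rpow_enorm_toReal (by norm_num) (by norm_num)]
    rw [← ENNReal.rpow_natCast _ 2, ← ENNReal.rpow_mul]
    norm_num
    congr 1
    funext x
    rw [Real.enorm_eq_ofReal_abs, ← ENNReal.ofReal_pow (abs_nonneg _), sq_abs]
  rw [hI]
  have h1 : eLpNorm u (ENNReal.ofReal q) μ ≤ ENNReal.ofReal C :=
    (eLpNorm_mono_measure u Measure.restrict_le_self).trans hbound
  have h2 : μ Set.univ = volume s := by simp [hμ]
  calc (eLpNorm u 2 μ)^2
      ≤ (ENNReal.ofReal C * (volume s)^((1:ℝ)/2 - 1/q))^2 := by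
        refine pow_le_pow_left' (key.trans ?_) 2
        rw [h2]
        have : (ENNReal.ofReal q).toReal = q := ENNReal.toReal_ofReal hq0.le
        rw [this]
        exact mul_le_mul_left h1 _
    _ = (ENNReal.ofReal C)^2 * (volume s)^(1 - 2/q) := by
        rw [mul_pow, ← ENNReal.rpow_natCast ((volume s)^((1:ℝ)/2 - 1/q)) 2,
          ← ENNReal.rpow_mul]
        ring_nf

theorem stmt_10 (N : ℕ) (hN : 1 ≤ N)
    (O : Subgroup (EuclideanSpace ℝ (Fin N) ≃ₗᵢ[ℝ] EuclideanSpace ℝ (Fin N)))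
    (r : ℝ) (hr : 0 < r)
    (hcompat : ∀ n : ℕ, ∃ R : ℝ, ∀ y : EuclideanSpace ℝ (Fin N), R ≤ ‖y‖ →
      ∃ g : Fin n → O, ∀ i j, i ≠ j →
        Disjoint (Metric.ball ((g i : EuclideanSpace ℝ (Fin N) ≃ₗᵢ[ℝ]
              EuclideanSpace ℝ (Fin N)) y) r)
          (Metric.ball ((g j : EuclideanSpace ℝ (Fin N) ≃ₗᵢ[ℝ]
              EuclideanSpace ℝ (Fin N)) y) r))
    (q C : ℝ) (hq : 2 ≤ q) (hC : 0 < C)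
    (u : ℕ → EuclideanSpace ℝ (Fin N) → ℝ)
    (hmeas : ∀ n, Measurable (u n))
    (hinv : ∀ n, ∀ g ∈ O, ∀ᵐ x,
      u n ((g : EuclideanSpace ℝ (Fin N) ≃ₗᵢ[ℝ] EuclideanSpace ℝ (Fin N)) x) = u n x)
    (hbound : ∀ n, eLpNorm (u n) (ENNReal.ofReal q) volume ≤ ENNReal.ofReal C)
    (hloc : ∀ R > (0 : ℝ), Filter.Tendsto
      (fun n => ∫⁻ x in Metric.ball (0 : EuclideanSpace ℝ (Fin N)) R,
        ENNReal.ofReal ((u n x) ^ 2)) Filter.atTop (nhds 0)) :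
    Filter.Tendsto
      (fun n => ⨆ y : EuclideanSpace ℝ (Fin N),
        ∫⁻ x in Metric.ball y r, ENNReal.ofReal ((u n x) ^ 2))
      Filter.atTop (nhds 0) := by
  have hq0 : (0:ℝ) < q := by linarith
  have hexp : (0:ℝ) ≤ 1 - 2/q := by
    have : 2/q ≤ 1 := (div_le_one hq0).2 hq
    linarith
  set I : ℕ → EuclideanSpace ℝ (Fin N) → ℝ≥0∞ :=
    fun n y => ∫⁻ x in Metric.ball y r, ENNReal.ofReal ((u n x)^2) with hIdef
  set V : ℝ≥0∞ := volume (Metric.ball (0 : EuclideanSpace ℝ (Fin N)) r) with hV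
  have hVtop : V ≠ ∞ := measure_ball_lt_top.ne
  set D : ℝ≥0∞ := (ENNReal.ofReal C)^2 * V^(1 - 2/q) with hD
  have hDtop : D ≠ ∞ := by
    apply ENNReal.mul_ne_top
    · exact pow_ne_top ENNReal.ofReal_ne_top
    · exact (ENNReal.rpow_lt_top_of_nonneg hexp hVtop).ne
  -- Step 3: outer bound
  have step3 : ∀ k : ℕ, 1 ≤ k → ∀ R : ℝ,
      (∀ y : EuclideanSpace ℝ (Fin N), R ≤ ‖y‖ → ∃ g : Fin k → O, ∀ i j, i ≠ j →
        Disjoint (Metric.ball ((g i : EuclideanSpace ℝ (Fin N) ≃ₗᵢ[ℝ]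
              EuclideanSpace ℝ (Fin N)) y) r)
          (Metric.ball ((g j : EuclideanSpace ℝ (Fin N) ≃ₗᵢ[ℝ]
              EuclideanSpace ℝ (Fin N)) y) r)) →
      ∀ n (y : EuclideanSpace ℝ (Fin N)), R ≤ ‖y‖ →
        I n y ≤ D * (k:ℝ≥0∞)^(-(2/q)) := by
    intro k hk R hR n y hy
    obtain ⟨g, hg⟩ := hR y hy
    set A : Fin k → Set (EuclideanSpace ℝ (Fin N)) :=
      fun i => Metric.ball ((g i : EuclideanSpace ℝ (Fin N) ≃ₗᵢ[ℝ]
        EuclideanSpace ℝ (Fin N)) y) r with hA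
    have hk0 : (k:ℝ≥0∞) ≠ 0 := Nat.cast_ne_zero.mpr (by omega)
    have hktop : (k:ℝ≥0∞) ≠ ∞ := ENNReal.natCast_ne_top k
    have hsum : (k:ℝ≥0∞) * I n y = ∫⁻ x in ⋃ i, A i, ENNReal.ofReal ((u n x)^2) := by
      rw [lintegral_iUnion (fun i => measurableSet_ball) (fun i j hij => hg i j hij),
        tsum_fintype]
      have heach : ∀ i : Fin k, ∫⁻ x in A i, ENNReal.ofReal ((u n x)^2) = I n y :=
        fun i => aux_inv _ (u n) (hinv n _ (g i).2) y r
      simp only [show ∀ i : Fin k, ∫⁻ x in Metric.ball ((g i : EuclideanSpace ℝ (Fin N) ≃ₗᵢ[ℝ]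
          EuclideanSpace ℝ (Fin N)) y) r, ENNReal.ofReal ((u n x)^2) = I n y from heach, Finset.sum_const, Finset.card_univ, Fintype.card_fin, nsmul_eq_mul]
    have hvol : volume (⋃ i, A i) ≤ (k:ℝ≥0∞) * V := by
      refine (measure_iUnion_le _).trans ?_
      have hvA : ∀ i : Fin k, volume (A i) = V := fun i =>
        Measure.addHaar_ball_center volume _ r
      rw [tsum_fintype]
      simp only [hvA, Finset.sum_const, Finset.card_univ, Fintype.card_fin, nsmul_eq_mul]
      exact le_rfl
    have hmain : (k:ℝ≥0∞) * I n y ≤ (D * (k:ℝ≥0∞)^(-(2/q))) * k := by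
      rw [hsum]
      calc ∫⁻ x in ⋃ i, A i, ENNReal.ofReal ((u n x)^2)
          ≤ (ENNReal.ofReal C)^2 * (volume (⋃ i, A i))^(1 - 2/q) :=
            aux_holder hq (u n) (hmeas n) (hbound n) _
        _ ≤ (ENNReal.ofReal C)^2 * ((k:ℝ≥0∞) * V)^(1 - 2/q) :=
            mul_le_mul_right (ENNReal.rpow_le_rpow hvol hexp) _
        _ = (D * (k:ℝ≥0∞)^(-(2/q))) * k := by
            rw [ENNReal.mul_rpow_of_nonneg _ _ hexp, hD]
            rw [show (1 - 2/q) = -(2/q) + 1 by ring,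
              ENNReal.rpow_add _ _ hk0 hktop, ENNReal.rpow_one]
            ring
    rw [mul_comm] at hmain
    exact (ENNReal.mul_le_mul_iff_left hk0 hktop).1 hmain
  -- Step 4: choice of k for a given δ
  have step4 : ∀ δ : ℝ, 0 < δ → ∃ k : ℕ, 1 ≤ k ∧
      D * (k:ℝ≥0∞)^(-(2/q)) ≤ ENNReal.ofReal δ := by
    intro δ hδ
    have h2q : (0:ℝ) < 2/q := by positivity
    have htend : Filter.Tendsto (fun k : ℕ => ((k:ℝ))^(2/q)) Filter.atTop Filter.atTop :=
      (tendsto_rpow_atTop h2q).comp tendsto_natCast_atTop_atTop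
    obtain ⟨k, hk⟩ := ((htend.eventually_ge_atTop (D.toReal / δ)).and
      (Filter.eventually_ge_atTop 1)).exists
    refine ⟨k, hk.2, ?_⟩
    have hk1 : (1:ℝ) ≤ (k:ℝ) := by exact_mod_cast hk.2
    have hkpos : (0:ℝ) < (k:ℝ)^(2/q) := Real.rpow_pos_of_pos (by linarith) _
    have hk2 : (k:ℝ≥0∞)^(2/q) = ENNReal.ofReal ((k:ℝ)^(2/q)) := by
      rw [← ENNReal.ofReal_natCast, ENNReal.ofReal_rpow_of_nonneg (Nat.cast_nonneg k) h2q.le]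
    rw [ENNReal.rpow_neg, hk2, ← div_eq_mul_inv,
      ENNReal.div_le_iff_le_mul (Or.inl (ENNReal.ofReal_pos.mpr hkpos).ne')
        (Or.inl ENNReal.ofReal_ne_top),
      ← ENNReal.ofReal_mul hδ.le]
    calc D = ENNReal.ofReal D.toReal := (ENNReal.ofReal_toReal hDtop).symm
      _ ≤ ENNReal.ofReal (δ * (k:ℝ)^(2/q)) := by
          apply ENNReal.ofReal_le_ofReal
          have := (div_le_iff₀ hδ).1 hk.1
          nlinarith
  -- Assembly
  rw [ENNReal.tendsto_nhds_zero]
  intro ε hε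
  by_cases hεtop : ε = ⊤
  · filter_upwards with n; simp [hεtop]
  have hεR : (0:ℝ) < min ε.toReal 1 :=
    lt_min (ENNReal.toReal_pos hε.ne' hεtop) one_pos
  set δ : ℝ := min ε.toReal 1 with hδdef
  have hδε : ENNReal.ofReal δ ≤ ε := by
    calc ENNReal.ofReal δ ≤ ENNReal.ofReal ε.toReal :=
          ENNReal.ofReal_le_ofReal (min_le_left _ _)
      _ = ε := ENNReal.ofReal_toReal hεtop
  obtain ⟨k, hk1, hkδ⟩ := step4 δ hεR
  obtain ⟨R, hR⟩ := hcompat k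
  have hRpos : (0:ℝ) < max R 0 + r := by
    have : (0:ℝ) ≤ max R 0 := le_max_right _ _
    linarith
  have hev : ∀ᶠ n in Filter.atTop,
      (∫⁻ x in Metric.ball (0 : EuclideanSpace ℝ (Fin N)) (max R 0 + r),
        ENNReal.ofReal ((u n x)^2)) < ENNReal.ofReal δ :=
    (hloc _ hRpos).eventually_lt_const (by simpa using ENNReal.ofReal_pos.mpr hεR)
  filter_upwards [hev] with n hn
  refine iSup_le fun y => ?_
  by_cases hy : R ≤ ‖y‖
  · exact ((step3 k hk1 R hR n y hy).trans hkδ).trans hδε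
  · push_neg at hy
    have hsub : Metric.ball y r ⊆
        Metric.ball (0 : EuclideanSpace ℝ (Fin N)) (max R 0 + r) := by
      intro x hx
      rw [Metric.mem_ball] at hx ⊢
      have h1 : dist x 0 ≤ dist x y + dist y 0 := dist_triangle _ _ _
      have h2 : dist y 0 = ‖y‖ := by simp
      have h3 : ‖y‖ < max R 0 := lt_of_lt_of_le hy (le_max_left _ _)
      linarith
    calc I n y ≤ ∫⁻ x in Metric.ball (0 : EuclideanSpace ℝ (Fin N)) (max R 0 + r),
          ENNReal.ofReal ((u n x)^2) := lintegral_mono_set hsub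
      _ ≤ ε := hn.le.trans hδε
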